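/- Suppose the summary statistic takes values in ℝ^d and that under model i the summary has a density g_i : ℝ^d → [0, ∞) with respect to Lebesgue measure, with each g_i continuous at the observed value s_0 ∈ ℝ^d. Fix a prior p = (p_1, …, p_M) with Σ_{j=1}^M p_j g_j(s_0) > 0. For h > 0 define the ABC posterior model weight p_ABC,h(𝓜_i) = p_i ∫_{B(s_0, h)} g_i(s) ds / Σ_{j=1}^M p_j ∫_{B(s_0, h)} g_j(s) ds, where B(s_0, h) is the closed Euclidean ball of radius h about s_0 (so the denominator is positive for all sufficiently small h > 0). Then as h → 0⁺, p_ABC,h(𝓜_i) converges to p_i g_i(s_0) / Σ_{j=1}^M p_j g_j(s_0), the exact posterior probability Pr(𝓜_i | S = s_0), for each i. -/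

import Mathlib

open MeasureTheory

/-- Averages of a locally integrable function over closed balls converge to the value at a
point of continuity, as the radius tends to `0⁺`. -/
lemma tendsto_avg_closedBall {E : Type*} [NormedAddCommGroup E] [NormedSpace ℝ E]
    [MeasurableSpace E] [BorelSpace E] [FiniteDimensional ℝ E]
    (μ : Measure E) [μ.IsAddHaarMeasure]
    (f : E → ℝ) (hf : Integrable f μ) (s₀ : E) (hcont : ContinuousAt f s₀) :
    Filter.Tendsto
      (fun h : ℝ => (∫ s in Metric.closedBall s₀ h, f s ∂μ) / (μ (Metric.closedBall s₀ h)).toReal)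
      (nhdsWithin 0 (Set.Ioi 0)) (nhds (f s₀)) := by
  rw [Metric.tendsto_nhds]
  intro ε hε
  have hcont' : ∀ᶠ s in nhds s₀, dist (f s) (f s₀) < ε / 2 :=
    hcont (Metric.ball_mem_nhds _ (by linarith))
  rcases Metric.eventually_nhds_iff_ball.1 hcont' with ⟨δ, hδ, hball⟩
  filter_upwards [Ioo_mem_nhdsGT_of_mem ⟨le_rfl, half_pos hδ⟩] with h hh
  obtain ⟨hh0, hhδ⟩ := hh
  set B := Metric.closedBall s₀ h with hB
  have hBmeas : MeasurableSet B := Metric.isClosed_closedBall.measurableSet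
  have hμpos : 0 < μ B := Metric.measure_closedBall_pos μ s₀ hh0
  have hμlt : μ B < ⊤ := measure_closedBall_lt_top
  set V : ℝ := (μ B).toReal with hV
  have hVpos : 0 < V := ENNReal.toReal_pos (ne_of_gt hμpos) (ne_of_lt hμlt)
  have key : ‖(∫ s in B, f s ∂μ) - (f s₀) * V‖ ≤ (ε / 2) * V := by
    have : (f s₀) * V = ∫ s in B, f s₀ ∂μ := by
      rw [setIntegral_const, smul_eq_mul, measureReal_def]; ring
    rw [this, ← integral_sub (hf.restrict) (integrableOn_const hμlt.ne)]
    apply norm_setIntegral_le_of_norm_le_const hμlt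
    intro s hs
    have : s ∈ Metric.ball s₀ δ := by
      rw [Metric.mem_ball]
      calc dist s s₀ ≤ h := hs
        _ < δ := by linarith
    have := hball s this
    rw [Real.dist_eq] at this
    simpa [Real.norm_eq_abs] using le_of_lt this
  rw [Real.dist_eq]
  have : (∫ s in B, f s ∂μ) / V - f s₀ = ((∫ s in B, f s ∂μ) - f s₀ * V) / V := by
    field_simp
  rw [this, abs_div, abs_of_pos hVpos, div_lt_iff₀ hVpos]
  calc |(∫ s in B, f s ∂μ) - f s₀ * V| ≤ (ε / 2) * V := by
        simpa [Real.norm_eq_abs] using key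
    _ < ε * V := by nlinarith

/-- **Convergence of ABC posterior model weights as `h → 0⁺`.** If under each model the
summary statistic has a density `g i` on `ℝ^d` continuous at the observed value `s₀`, and
the prior satisfies `∑ j, p j * g j s₀ > 0`, then the ABC posterior model weight computed
with acceptance ball `B(s₀, h)` converges, as `h → 0⁺`, to the exact posterior model
probability `p i * g i s₀ / ∑ j, p j * g j s₀`. -/
theorem abc_model_weight_tendsto_posterior
    (M d : ℕ) (hM : 2 ≤ M) (hd : 1 ≤ d)
    (g : Fin M → EuclideanSpace ℝ (Fin d) → ℝ)
    (hg_meas : ∀ i, Measurable (g i)) (hg_nonneg : ∀ i s, 0 ≤ g i s)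
    (hg_one : ∀ i, ∫ s, g i s = 1)
    (p : Fin M → ℝ) (hp_nonneg : ∀ i, 0 ≤ p i) (hp_one : ∑ i, p i = 1)
    (s₀ : EuclideanSpace ℝ (Fin d)) (hg_cont : ∀ i, ContinuousAt (g i) s₀)
    (hpos : 0 < ∑ j, p j * g j s₀) (i : Fin M) :
    Filter.Tendsto
      (fun h : ℝ =>
        p i * (∫ s in Metric.closedBall s₀ h, g i s) /
          ∑ j, p j * ∫ s in Metric.closedBall s₀ h, g j s)
      (nhdsWithin 0 (Set.Ioi 0))
      (nhds (p i * g i s₀ / ∑ j, p j * g j s₀)) := by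
  have hint : ∀ j, Integrable (g j) := by
    intro j
    by_contra hni
    have := integral_undef hni
    rw [hg_one j] at this
    norm_num at this
  set V : ℝ → ℝ := fun h => (volume (Metric.closedBall s₀ h)).toReal with hVdef
  have havg : ∀ j, Filter.Tendsto
      (fun h : ℝ => (∫ s in Metric.closedBall s₀ h, g j s) / V h)
      (nhdsWithin 0 (Set.Ioi 0)) (nhds (g j s₀)) := fun j =>
    tendsto_avg_closedBall volume (g j) (hint j) s₀ (hg_cont j)
  have hnum : Filter.Tendsto
      (fun h : ℝ => p i * ((∫ s in Metric.closedBall s₀ h, g i s) / V h))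
      (nhdsWithin 0 (Set.Ioi 0)) (nhds (p i * g i s₀)) :=
    (havg i).const_mul _
  have hden : Filter.Tendsto
      (fun h : ℝ => ∑ j, p j * ((∫ s in Metric.closedBall s₀ h, g j s) / V h))
      (nhdsWithin 0 (Set.Ioi 0)) (nhds (∑ j, p j * g j s₀)) :=
    tendsto_finset_sum _ fun j _ => (havg j).const_mul _
  have hdiv := hnum.div hden (ne_of_gt hpos)
  apply hdiv.congr'
  filter_upwards [self_mem_nhdsWithin] with h hh
  have hVpos : 0 < V h := by
    apply ENNReal.toReal_pos
    · exact ne_of_gt (Metric.measure_closedBall_pos volume s₀ hh)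
    · exact ne_of_lt measure_closedBall_lt_top
  have hVne : V h ≠ 0 := ne_of_gt hVpos
  have key : ∀ a b : ℝ, (a / V h) / (b / V h) = a / b := by
    intro a b
    rcases eq_or_ne b 0 with rfl | hb
    · simp
    · field_simp
  have h1 : p i * ((∫ s in Metric.closedBall s₀ h, g i s) / V h)
      = (p i * ∫ s in Metric.closedBall s₀ h, g i s) / V h := by ring
  have h2 : (∑ j, p j * ((∫ s in Metric.closedBall s₀ h, g j s) / V h))
      = (∑ j, p j * ∫ s in Metric.closedBall s₀ h, g j s) / V h := by
    rw [Finset.sum_div]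
    exact Finset.sum_congr rfl fun j _ => by ring
  simp only [Pi.div_apply]
  rw [h1, h2, key]
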